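/- arXiv:2010.05678 — 2 statements merged into one kernel-verified Lean document; each statement's English description precedes it below -/
import Mathlib

section
/- Let p be a prime and H_p the Heisenberg group of order p^3 (upper-triangular unipotent 3×3 matrices over ZMod p). Every complex irreducible representation of H_p has dimension either 1 or p. -/
open Matrix

/-- The matrix [[1,a,c],[0,1,b],[0,0,1]]. -/
def heisMat (p : ℕ) (a b c : ZMod p) : Matrix (Fin 3) (Fin 3) (ZMod p) :=
  !![1, a, c; 0, 1, b; 0, 0, 1]

/-- The Heisenberg group mod `p`, as a subgroup of `GL₃(ZMod p)`. -/
def Heis (p : ℕ) : Subgroup (GL (Fin 3) (ZMod p)) where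
  carrier := {g | ∃ a b c : ZMod p,
    (g : Matrix (Fin 3) (Fin 3) (ZMod p)) = heisMat p a b c}
  one_mem' := ⟨0, 0, 0, by simp [heisMat, Matrix.one_fin_three]⟩
  mul_mem' := by
    rintro x y ⟨a, b, c, hx⟩ ⟨a', b', c', hy⟩
    refine ⟨a + a', b + b', c + c' + a * b', ?_⟩
    rw [Units.val_mul, hx, hy]
    ext i j
    fin_cases i <;> fin_cases j <;>
      simp [heisMat, Matrix.mul_apply, Fin.sum_univ_three, Matrix.vecHead, Matrix.vecTail] <;> ring
  inv_mem' := by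
    rintro x ⟨a, b, c, hx⟩
    refine ⟨-a, -b, a * b - c, ?_⟩
    have h1 : (x : Matrix (Fin 3) (Fin 3) (ZMod p)) * heisMat p (-a) (-b) (a * b - c) = 1 := by
      rw [hx]
      ext i j
      fin_cases i <;> fin_cases j <;>
        simp [heisMat, Matrix.mul_apply, Fin.sum_univ_three, Matrix.one_apply, Matrix.vecHead, Matrix.vecTail] <;> ring
    calc ((x⁻¹ : GL (Fin 3) (ZMod p)) : Matrix (Fin 3) (Fin 3) (ZMod p))
        = ↑x⁻¹ * 1 := by rw [mul_one]
      _ = ↑x⁻¹ * (↑x * heisMat p (-a) (-b) (a * b - c)) := by rw [h1]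
      _ = (↑x⁻¹ * ↑x) * heisMat p (-a) (-b) (a * b - c) := by rw [mul_assoc]
      _ = heisMat p (-a) (-b) (a * b - c) := by rw [Units.inv_mul, one_mul]


namespace HeisAux

variable {p : ℕ}

lemma heisMul (a b c a' b' c' : ZMod p) :
    heisMat p a b c * heisMat p a' b' c' = heisMat p (a + a') (b + b') (c + c' + a * b') := by
  ext i j
  fin_cases i <;> fin_cases j <;>
    simp [heisMat, Matrix.mul_apply, Fin.sum_univ_three, Matrix.vecHead, Matrix.vecTail] <;> ring

lemma heisOne : heisMat p 0 0 0 = 1 := by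
  ext i j
  fin_cases i <;> fin_cases j <;>
    simp [heisMat, Matrix.one_apply, Matrix.vecHead, Matrix.vecTail]

/-- bundled unit -/
def heisUnit (a b c : ZMod p) : GL (Fin 3) (ZMod p) where
  val := heisMat p a b c
  inv := heisMat p (-a) (-b) (a * b - c)
  val_inv := by rw [heisMul]; ring_nf; exact heisOne
  inv_val := by rw [heisMul]; ring_nf; exact heisOne

/-- element of the Heisenberg subgroup -/
def e (a b c : ZMod p) : ↥(Heis p) := ⟨heisUnit a b c, ⟨a, b, c, rfl⟩⟩

lemma e_injective_aux {a b c a' b' c' : ZMod p}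
    (h : heisMat p a b c = heisMat p a' b' c') : a = a' ∧ b = b' ∧ c = c' := by
  constructor
  · have := congrFun (congrFun h 0) 1; simpa [heisMat] using this
  constructor
  · have := congrFun (congrFun h 1) 2; simpa [heisMat] using this
  · have := congrFun (congrFun h 0) 2; simpa [heisMat] using this

lemma e_mul (a b c a' b' c' : ZMod p) :
    e a b c * e a' b' c' = e (a + a') (b + b') (c + c' + a * b') := by
  apply Subtype.ext; apply Units.ext
  exact heisMul a b c a' b' c'

lemma e_one : (e 0 0 0 : ↥(Heis p)) = 1 := by
  apply Subtype.ext; apply Units.ext; exact heisOne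

lemma e_surj (g : ↥(Heis p)) : ∃ a b c, g = e a b c := by
  obtain ⟨a, b, c, h⟩ := g.2
  exact ⟨a, b, c, Subtype.ext (Units.ext h)⟩

lemma e_pow_x (a : ZMod p) (n : ℕ) : (e a 0 0 : ↥(Heis p)) ^ n = e ((n : ZMod p) * a) 0 0 := by
  induction n with
  | zero => simpa using e_one.symm
  | succ n ih => rw [pow_succ, ih, e_mul]; push_cast; ring_nf

lemma e_pow_y (b : ZMod p) (n : ℕ) : (e 0 b 0 : ↥(Heis p)) ^ n = e 0 ((n : ZMod p) * b) 0 := by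
  induction n with
  | zero => simpa using e_one.symm
  | succ n ih => rw [pow_succ, ih, e_mul]; push_cast; ring_nf

lemma e_pow_z (c : ZMod p) (n : ℕ) : (e 0 0 c : ↥(Heis p)) ^ n = e 0 0 ((n : ZMod p) * c) := by
  induction n with
  | zero => simpa using e_one.symm
  | succ n ih => rw [pow_succ, ih, e_mul]; push_cast; ring_nf

lemma gen [NeZero p] (a b c : ZMod p) :
    e a b c = e 1 0 0 ^ a.val * e 0 1 0 ^ b.val * e 0 0 1 ^ (c - a * b).val := by
  rw [e_pow_x, e_pow_y, e_pow_z, e_mul, e_mul]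
  rw [ZMod.natCast_val, ZMod.natCast_val, ZMod.natCast_val, ZMod.cast_id, ZMod.cast_id,
    ZMod.cast_id]
  ring_nf

lemma z_central (g : ↥(Heis p)) : g * e 0 0 1 = e 0 0 1 * g := by
  obtain ⟨a, b, c, rfl⟩ := e_surj g
  rw [e_mul, e_mul]; ring_nf

lemma xy_eq (p : ℕ) : (e 1 0 0 : ↥(Heis p)) * e 0 1 0 = e 0 0 1 * (e 0 1 0 * e 1 0 0) := by
  rw [e_mul, e_mul, e_mul]; ring_nf

end HeisAux

open CategoryTheory Module

variable {G : Type} [Group G] (ρ : FDRep ℂ G) [Simple ρ]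

example : FiniteDimensional ℂ ρ := by infer_instance
example : FiniteDimensional ℂ (ρ ⟶ ρ) := by infer_instance

lemma finrank_pos' : 0 < finrank ℂ ρ := by
  by_contra h
  push_neg at h
  have h0 : finrank ℂ ρ = 0 := Nat.le_zero.mp h
  have : Subsingleton ρ := (Module.finrank_zero_iff (R := ℂ)).mp h0
  have : (𝟙 ρ : ρ ⟶ ρ) = 0 := by
    ext x
    exact Subsingleton.elim (α := ρ) _ _
  exact CategoryTheory.id_nonzero ρ this

lemma scalar_of_comm' (f : ρ →ₗ[ℂ] ρ) (hf : ∀ g : G, f ∘ₗ (ρ.ρ g) = (ρ.ρ g) ∘ₗ f) :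
    ∃ c : ℂ, f = c • LinearMap.id := by
  let φ : ρ ⟶ ρ := ⟨FGModuleCat.ofHom f, by
    intro g
    ext x
    show (f ∘ₗ ρ.ρ g) x = (ρ.ρ g ∘ₗ f) x
    exact LinearMap.congr_fun (hf g) x⟩
  obtain ⟨c, hc⟩ := CategoryTheory.endomorphism_simple_eq_smul_id ℂ φ
  refine ⟨c, ?_⟩
  have := congrArg (fun φ => φ.hom.hom.hom) hc
  ext x
  exact (LinearMap.congr_fun this x).symm

lemma dim_eq_one_of_scalar (h : ∀ g : G, ∃ c : ℂ, ρ.ρ g = c • LinearMap.id) :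
    finrank ℂ ρ = 1 := by
  let Φ : (ρ →ₗ[ℂ] ρ) →ₗ[ℂ] (ρ ⟶ ρ) :=
    { toFun := fun f => ⟨FGModuleCat.ofHom f, by
        intro g
        ext x
        show (f ∘ₗ ρ.ρ g) x = (ρ.ρ g ∘ₗ f) x
        obtain ⟨c, hc⟩ := h g
        rw [hc]
        simp⟩
      map_add' := by intro f g; rfl
      map_smul' := by intro c f; rfl }
  have hinj : Function.Injective Φ := by
    intro f g hfg
    exact congrArg (fun φ => φ.hom.hom.hom) hfg
  have hle : finrank ℂ (ρ →ₗ[ℂ] ρ) ≤ finrank ℂ (ρ ⟶ ρ) :=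
    LinearMap.finrank_le_finrank_of_injective hinj
  have h1 : finrank ℂ (ρ ⟶ ρ) = 1 := by
    rw [CategoryTheory.finrank_hom_simple_simple ℂ ρ ρ]
    simp
  rw [h1, Module.finrank_linearMap] at hle
  have hpos := finrank_pos' ρ
  nlinarith [hpos, hle]

open Module in
lemma dim_eq_p' (p : ℕ) (hp : p.Prime) (x y z : G) (c : ℂ)
    (hgen : ∀ g : G, ∃ i j k : ℕ, g = x ^ i * y ^ j * z ^ k)
    (hz : ρ.ρ z = c • LinearMap.id)
    (hcp : c ^ p = 1) (hc1 : c ≠ 1)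
    (hxp : x ^ p = 1) (hyp : y ^ p = 1)
    (hxyz : x * y = z * (y * x)) :
    finrank ℂ ρ = p := by
  haveI : Fact p.Prime := ⟨hp⟩
  have hppos : 0 < p := hp.pos
  set X : Module.End ℂ ρ := ρ.ρ x with hXdef
  set Y : Module.End ℂ ρ := ρ.ρ y with hYdef
  have hXp : X ^ p = 1 := by rw [hXdef, ← _root_.map_pow, hxp, _root_.map_one]
  have hYp : Y ^ p = 1 := by rw [hYdef, ← _root_.map_pow, hyp, _root_.map_one]
  have hXY : X * Y = c • (Y * X) := by
    have h := congrArg ρ.ρ hxyz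
    rw [_root_.map_mul, _root_.map_mul, _root_.map_mul, hz] at h
    rw [hXdef, hYdef, h]
    rw [smul_mul_assoc]
    congr 1
  have hordc : orderOf c = p := orderOf_eq_prime hcp hc1
  haveI : Nontrivial ρ :=
    Module.finrank_pos_iff.mp (finrank_pos' ρ)
  obtain ⟨μ, hμ⟩ := Module.End.exists_eigenvalue X
  obtain ⟨v, hv⟩ := hμ.exists_hasEigenvector
  have hμp : μ ^ p = 1 := by
    have h1 : (X ^ p) v = μ ^ p • v := hv.pow_apply p
    rw [hXp] at h1
    have h2 : (μ ^ p - 1) • v = 0 := by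
      rw [sub_smul, one_smul, ← h1]
      simp
    rcases smul_eq_zero.mp h2 with h | h
    · exact sub_eq_zero.mp h
    · exact absurd h hv.right
  have hμ0 : μ ≠ 0 := by
    intro h
    rw [h, zero_pow hppos.ne'] at hμp
    exact zero_ne_one hμp
  have hXw : ∀ k : ℕ, X ((Y ^ k) v) = (c ^ k * μ) • ((Y ^ k) v) := by
    intro k
    induction k with
    | zero => simpa using hv.apply_eq_smul
    | succ k ih =>
      have h1 : X (Y ((Y ^ k) v)) = c • Y (X ((Y ^ k) v)) := by
        have h2 := LinearMap.congr_fun hXY ((Y ^ k) v)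
        simpa [Module.End.mul_apply] using h2
      have h3 : (Y ^ (k + 1)) v = Y ((Y ^ k) v) := by
        rw [pow_succ', Module.End.mul_apply]
      rw [h3, h1, ih, _root_.map_smul, smul_smul, pow_succ]
      ring_nf
  set w : Fin p → ρ := fun k => (Y ^ (k : ℕ)) v with hwdef
  have hw0 : ∀ k : Fin p, w k ≠ 0 := by
    intro k hk0
    have h2 : ((Y ^ (p - (k : ℕ))) * (Y ^ (k : ℕ))) v = 0 := by
      rw [Module.End.mul_apply]
      rw [show (Y ^ (k : ℕ)) v = w k from rfl, hk0, _root_.map_zero]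
    rw [← pow_add, Nat.sub_add_cancel k.2.le, hYp] at h2
    exact hv.right h2
  have hvec : ∀ k : Fin p, X.HasEigenvector (c ^ (k : ℕ) * μ) (w k) :=
    fun k => ⟨Module.End.mem_eigenspace_iff.mpr (hXw (k : ℕ)), hw0 k⟩
  have hinj : Function.Injective fun k : Fin p => c ^ (k : ℕ) * μ := by
    intro i j hij
    have h2 : c ^ (i : ℕ) = c ^ (j : ℕ) := mul_right_cancel₀ hμ0 hij
    exact Fin.ext (pow_injOn_Iio_orderOf
      (by rw [hordc]; exact Set.mem_Iio.mpr i.2)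
      (by rw [hordc]; exact Set.mem_Iio.mpr j.2) h2)
  have hli : LinearIndependent ℂ w :=
    X.eigenvectors_linearIndependent' (fun k : Fin p => c ^ (k : ℕ) * μ) hinj w hvec
  set W : Submodule ℂ ρ := Submodule.span ℂ (Set.range w) with hWdef
  have hWrank : finrank ℂ W = p := by
    rw [hWdef, finrank_span_eq_card hli, Fintype.card_fin]
  have pres : ∀ f : Module.End ℂ ρ, (∀ k, f (w k) ∈ W) → ∀ u ∈ W, f u ∈ W := by
    intro f hf u hu
    induction hu using Submodule.span_induction with
    | mem u hu => obtain ⟨k, rfl⟩ := hu; exact hf k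
    | zero => simpa using W.zero_mem
    | add u₁ u₂ _ _ h1 h2 => rw [_root_.map_add]; exact W.add_mem h1 h2
    | smul a u _ h1 => rw [_root_.map_smul]; exact W.smul_mem a h1
  have hYm : ∀ m : ℕ, (Y ^ m) v ∈ W := by
    intro m
    have h2 : Y ^ m = Y ^ (m % p) := by
      conv_lhs => rw [← Nat.div_add_mod m p]
      rw [pow_add, pow_mul, hYp, one_pow, one_mul]
    rw [h2]
    exact Submodule.subset_span ⟨⟨m % p, Nat.mod_lt _ hppos⟩, rfl⟩
  have hYW : ∀ u ∈ W, Y u ∈ W := by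
    refine pres Y (fun k => ?_)
    have h2 : Y (w k) = (Y ^ ((k : ℕ) + 1)) v := by
      rw [pow_succ', Module.End.mul_apply]
    rw [h2]; exact hYm _
  have hXW : ∀ u ∈ W, X u ∈ W := by
    refine pres X (fun k => ?_)
    rw [hwdef]
    simp only []
    rw [hXw (k : ℕ)]
    exact W.smul_mem _ (Submodule.subset_span ⟨k, rfl⟩)
  have hpow : ∀ (f : Module.End ℂ ρ), (∀ u ∈ W, f u ∈ W) →
      ∀ (n : ℕ), ∀ u ∈ W, (f ^ n) u ∈ W := by
    intro f hf n
    induction n with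
    | zero => intro u hu; simpa using hu
    | succ n ih =>
      intro u hu
      rw [pow_succ, Module.End.mul_apply]
      exact ih _ (hf u hu)
  have hinv : ∀ g : G, ∀ u ∈ W, ρ.ρ g u ∈ W := by
    intro g u hu
    obtain ⟨i, j, k, rfl⟩ := hgen g
    rw [_root_.map_mul, _root_.map_mul, _root_.map_pow, _root_.map_pow, _root_.map_pow,
      Module.End.mul_apply, Module.End.mul_apply]
    have hzk : ((ρ.ρ z) ^ k) u ∈ W := by
      have h2 : (ρ.ρ z) ^ k = c ^ k • (1 : Module.End ℂ ρ) := by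
        rw [hz, show (LinearMap.id : Module.End ℂ ρ) = 1 from rfl, smul_pow, one_pow]
      rw [h2]
      exact W.smul_mem _ (by simpa using hu)
    exact hpow X hXW i _ (hpow Y hYW j _ hzk)
  let σ : Representation ℂ G W :=
    { toFun := fun g => (ρ.ρ g).restrict (fun u hu => hinv g u hu)
      map_one' := by
        ext u
        simp [LinearMap.restrict_apply]
      map_mul' := by
        intro g h
        ext u
        simp [LinearMap.restrict_apply] }
  let τ : FDRep ℂ G := FDRep.of σ
  let ι : τ ⟶ ρ := ⟨FGModuleCat.ofHom W.subtype, by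
    intro g
    ext u
    rfl⟩
  haveI : Mono ι := ConcreteCategory.mono_of_injective ι (by exact Subtype.val_injective)
  have hvW : v ∈ W := by
    refine Submodule.subset_span ⟨⟨0, hppos⟩, ?_⟩
    simp [hwdef]
  have hι0 : ι ≠ 0 := by
    intro h
    have h2 := congrArg Action.Hom.hom h
    have h3 : W.subtype ⟨v, hvW⟩ = (0 : τ ⟶ ρ).hom ⟨v, hvW⟩ := by
      rw [← h2]; rfl
    simp at h3
    exact hv.right h3
  haveI : IsIso ι := isIso_of_mono_of_nonzero hι0
  have e : τ.V ≅ ρ.V := (Action.forget _ _).mapIso (asIso ι)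
  have he : finrank ℂ W = finrank ℂ ρ := (FGModuleCat.isoToLinearEquiv e).finrank_eq
  rw [← he, hWrank]

open HeisAux Module in
/-- Every complex irreducible representation of the Heisenberg group `H_p` has
dimension `1` or `p`. -/
theorem heis_irrep_dim_one_or_p (p : ℕ) [Fact p.Prime]
    (ρ : FDRep ℂ ↥(Heis p)) (hρ : Simple ρ) :
    Module.finrank ℂ ρ = 1 ∨ Module.finrank ℂ ρ = p := by
  haveI := hρ
  have hp : p.Prime := Fact.out
  haveI : NeZero p := ⟨hp.ne_zero⟩
  set x : ↥(Heis p) := e 1 0 0 with hxd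
  set y : ↥(Heis p) := e 0 1 0 with hyd
  set z : ↥(Heis p) := e 0 0 1 with hzd
  have hzcomm : ∀ g, (ρ.ρ z) ∘ₗ ρ.ρ g = ρ.ρ g ∘ₗ (ρ.ρ z) := by
    intro g
    have h := congrArg ρ.ρ (z_central g)
    rw [_root_.map_mul, _root_.map_mul] at h
    rw [← Module.End.mul_eq_comp, ← Module.End.mul_eq_comp]
    exact h.symm
  obtain ⟨c, hc⟩ := scalar_of_comm' ρ (ρ.ρ z) hzcomm
  have hzp : z ^ p = 1 := by
    rw [hzd, e_pow_z]
    simp only [ZMod.natCast_self, zero_mul, mul_one]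
    exact e_one
  have hcp : c ^ p = 1 := by
    have h1 : (ρ.ρ z) ^ p = 1 := by rw [← _root_.map_pow, hzp, _root_.map_one]
    rw [hc, show (LinearMap.id : Module.End ℂ ρ) = 1 from rfl, smul_pow, one_pow] at h1
    haveI : Nontrivial ρ := Module.finrank_pos_iff.mp (finrank_pos' ρ)
    obtain ⟨v, hv⟩ := exists_ne (0 : ρ)
    have h2 := LinearMap.congr_fun h1 v
    simp only [LinearMap.smul_apply, Module.End.one_apply] at h2
    have h3 : (c ^ p - 1) • v = 0 := by rw [sub_smul, one_smul, h2, sub_self]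
    rcases smul_eq_zero.mp h3 with h | h
    · exact sub_eq_zero.mp h
    · exact absurd h hv
  have hxp : x ^ p = 1 := by
    rw [hxd, e_pow_x]
    simp only [ZMod.natCast_self, zero_mul, mul_one]
    exact e_one
  have hyp : y ^ p = 1 := by
    rw [hyd, e_pow_y]
    simp only [ZMod.natCast_self, zero_mul, mul_one]
    exact e_one
  have hxyz : x * y = z * (y * x) := xy_eq p
  have hgen : ∀ g : ↥(Heis p), ∃ i j k : ℕ, g = x ^ i * y ^ j * z ^ k := by
    intro g
    obtain ⟨a, b, cc, rfl⟩ := e_surj g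
    exact ⟨a.val, b.val, (cc - a * b).val, gen a b cc⟩
  by_cases hc1 : c = 1
  · left
    apply dim_eq_one_of_scalar
    have hzid : ρ.ρ z = 1 := by
      rw [hc, hc1, one_smul]; rfl
    have hxy : Commute (ρ.ρ x) (ρ.ρ y) := by
      have h := congrArg ρ.ρ hxyz
      simp only [_root_.map_mul] at h
      rw [hzid, one_mul] at h
      exact h
    have hcommAll : ∀ g h : ↥(Heis p), Commute (ρ.ρ g) (ρ.ρ h) := by
      intro g h
      obtain ⟨i, j, k, rfl⟩ := hgen g
      obtain ⟨i', j', k', rfl⟩ := hgen h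
      simp only [_root_.map_mul, _root_.map_pow, hzid, one_pow, mul_one]
      have c1 : Commute ((ρ.ρ x) ^ i) ((ρ.ρ x) ^ i' * (ρ.ρ y) ^ j') :=
        ((Commute.refl (ρ.ρ x)).pow_pow i i').mul_right (hxy.pow_pow i j')
      have c2 : Commute ((ρ.ρ y) ^ j) ((ρ.ρ x) ^ i' * (ρ.ρ y) ^ j') :=
        (hxy.symm.pow_pow j i').mul_right ((Commute.refl (ρ.ρ y)).pow_pow j j')
      exact c1.mul_left c2
    intro g
    apply scalar_of_comm' ρ (ρ.ρ g)
    intro h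
    rw [← Module.End.mul_eq_comp, ← Module.End.mul_eq_comp]
    exact hcommAll g h
  · right
    exact dim_eq_p' ρ p hp x y z c hgen hc hcp hc1 hxp hyp hxyz
end

section
/- Let p be a prime. The number of conjugacy classes of the Heisenberg group H_p of order p^3 over ZMod p is p^2 + p − 1. -/
open Matrix

/-! ### An explicit model of the Heisenberg group -/

@[ext]
structure HGrp (p : ℕ) where
  a : ZMod p
  b : ZMod p
  c : ZMod p

namespace HGrp

variable {p : ℕ}

instance : Mul (HGrp p) := ⟨fun x y => ⟨x.a + y.a, x.b + y.b, x.c + y.c + x.a * y.b⟩⟩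
instance : One (HGrp p) := ⟨⟨0, 0, 0⟩⟩
instance : Inv (HGrp p) := ⟨fun x => ⟨-x.a, -x.b, x.a * x.b - x.c⟩⟩

@[simp] lemma mul_a (x y : HGrp p) : (x * y).a = x.a + y.a := rfl
@[simp] lemma mul_b (x y : HGrp p) : (x * y).b = x.b + y.b := rfl
@[simp] lemma mul_c (x y : HGrp p) : (x * y).c = x.c + y.c + x.a * y.b := rfl
@[simp] lemma one_a : (1 : HGrp p).a = 0 := rfl
@[simp] lemma one_b : (1 : HGrp p).b = 0 := rfl
@[simp] lemma one_c : (1 : HGrp p).c = 0 := rfl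
@[simp] lemma inv_a (x : HGrp p) : (x⁻¹).a = -x.a := rfl
@[simp] lemma inv_b (x : HGrp p) : (x⁻¹).b = -x.b := rfl
@[simp] lemma inv_c (x : HGrp p) : (x⁻¹).c = x.a * x.b - x.c := rfl

instance : Group (HGrp p) where
  mul_assoc x y z := by ext <;> simp <;> ring
  one_mul x := by ext <;> simp
  mul_one x := by ext <;> simp
  inv_mul_cancel x := by
    ext <;> simp

lemma isConj_iff' [Fact p.Prime] (x y : HGrp p) :
    IsConj x y ↔ x.a = y.a ∧ x.b = y.b ∧ (x.c = y.c ∨ ¬(x.a = 0 ∧ x.b = 0)) := by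
  rw [isConj_iff]
  constructor
  · rintro ⟨g, hg⟩
    subst hg
    refine ⟨by simp, by simp, ?_⟩
    by_cases h0 : x.a = 0 ∧ x.b = 0
    · left; simp [h0.1, h0.2]; ring
    · right; exact h0
  · rintro ⟨ha, hb, hc | h0⟩
    · exact ⟨1, by ext <;> simp [ha, hb, hc]⟩
    · rcases em (x.a = 0) with h | h
      · have hxb : x.b ≠ 0 := fun hb' => h0 ⟨h, hb'⟩
        refine ⟨⟨(y.c - x.c) / x.b, 0, 0⟩, ?_⟩
        have hyb : y.b ≠ 0 := by rw [← hb]; exact hxb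
        ext <;> simp [ha, hb, h]
        field_simp
        ring
      · refine ⟨⟨0, (x.c - y.c) / x.a, 0⟩, ?_⟩
        have hya : y.a ≠ 0 := by rw [← ha]; exact h
        ext <;> simp [ha, hb]
        field_simp
        ring

end HGrp

/-! ### The isomorphism between `HGrp p` and `Heis p` -/

lemma heisMat_mul {p : ℕ} (a b c a' b' c' : ZMod p) :
    heisMat p a b c * heisMat p a' b' c' = heisMat p (a + a') (b + b') (c + c' + a * b') := by
  ext i j
  fin_cases i <;> fin_cases j <;>
    simp [heisMat, Matrix.mul_apply, Fin.sum_univ_three, Matrix.vecHead, Matrix.vecTail] <;> ring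

lemma heisMat_zero {p : ℕ} : heisMat p 0 0 0 = 1 := by
  simp [heisMat, Matrix.one_fin_three]

def heisUnit (p : ℕ) (a b c : ZMod p) : GL (Fin 3) (ZMod p) :=
  ⟨heisMat p a b c, heisMat p (-a) (-b) (a * b - c),
   by rw [heisMat_mul]; rw [show a + -a = 0 by ring, show b + -b = 0 by ring,
        show c + (a * b - c) + a * -b = 0 by ring]; exact heisMat_zero,
   by rw [heisMat_mul]; rw [show -a + a = 0 by ring, show -b + b = 0 by ring,
        show a * b - c + c + -a * b = 0 by ring]; exact heisMat_zero⟩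

def toHeis (p : ℕ) : HGrp p →* ↥(Heis p) where
  toFun x := ⟨heisUnit p x.a x.b x.c, ⟨x.a, x.b, x.c, rfl⟩⟩
  map_one' := by
    apply Subtype.ext; apply Units.ext
    show heisMat p (1 : HGrp p).a (1 : HGrp p).b (1 : HGrp p).c = _
    rw [HGrp.one_a, HGrp.one_b, HGrp.one_c, heisMat_zero]
    rfl
  map_mul' x y := by
    apply Subtype.ext; apply Units.ext
    show heisMat p (x * y).a (x * y).b (x * y).c = heisMat p _ _ _ * heisMat p _ _ _
    rw [heisMat_mul, HGrp.mul_a, HGrp.mul_b, HGrp.mul_c]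

lemma heisMat_inj {p : ℕ} {a b c a' b' c' : ZMod p}
    (h : heisMat p a b c = heisMat p a' b' c') : a = a' ∧ b = b' ∧ c = c' := by
  refine ⟨?_, ?_, ?_⟩
  · have := congrFun (congrFun h 0) 1; simpa [heisMat] using this
  · have := congrFun (congrFun h 1) 2; simpa [heisMat] using this
  · have := congrFun (congrFun h 0) 2; simpa [heisMat] using this

lemma toHeis_bijective (p : ℕ) : Function.Bijective (toHeis p) := by
  constructor
  · intro x y h
    have : heisMat p x.a x.b x.c = heisMat p y.a y.b y.c :=
      congrArg (fun g : ↥(Heis p) => ((g : GL (Fin 3) (ZMod p)) : Matrix (Fin 3) (Fin 3) (ZMod p))) h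
    obtain ⟨h1, h2, h3⟩ := heisMat_inj this
    ext <;> assumption
  · rintro ⟨g, a, b, c, hg⟩
    refine ⟨⟨a, b, c⟩, ?_⟩
    apply Subtype.ext; apply Units.ext
    exact hg.symm

noncomputable def heisEquiv (p : ℕ) : HGrp p ≃* ↥(Heis p) :=
  MulEquiv.ofBijective (toHeis p) (toHeis_bijective p)

/-- A `MulEquiv` induces an equivalence on conjugacy classes. -/
def conjClassesCongr {G H : Type*} [Group G] [Group H] (e : G ≃* H) :
    ConjClasses G ≃ ConjClasses H :=
  Quotient.congr e.toEquiv (by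
    intro a b
    constructor
    · rintro ⟨g, hg⟩
      exact ⟨Units.map e.toMonoidHom g, by
        have := congrArg e hg
        simpa [_root_.map_mul, SemiconjBy] using this⟩
    · rintro ⟨g, hg⟩
      refine ⟨Units.map e.symm.toMonoidHom g, ?_⟩
      have := congrArg e.symm hg
      simpa [_root_.map_mul, SemiconjBy] using this)

/-! ### Counting conjugacy classes of `HGrp p` -/

abbrev Lab (p : ℕ) := ZMod p ⊕ {v : ZMod p × ZMod p // v ≠ 0}

def classify {p : ℕ} (x : HGrp p) : Lab p :=
  if h : (x.a, x.b) = 0 then Sum.inl x.c else Sum.inr ⟨(x.a, x.b), h⟩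

lemma classify_const {p : ℕ} [Fact p.Prime] {x y : HGrp p} (h : IsConj x y) :
    classify x = classify y := by
  rw [HGrp.isConj_iff'] at h
  obtain ⟨ha, hb, hc⟩ := h
  by_cases h0 : (x.a, x.b) = 0
  · have h0' := Prod.mk_eq_zero.mp h0
    have hc' : x.c = y.c := hc.resolve_right (not_not_intro h0')
    simp only [classify, ha, hb, hc']
  · simp only [classify]
    rw [ha, hb] at h0 ⊢
    rw [dif_neg h0, dif_neg h0]

noncomputable def countEquiv (p : ℕ) [Fact p.Prime] : ConjClasses (HGrp p) ≃ Lab p where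
  toFun := Quotient.lift classify (fun _ _ h => classify_const h)
  invFun := Sum.elim (fun c => ConjClasses.mk (⟨0, 0, c⟩ : HGrp p))
    (fun v => ConjClasses.mk (⟨v.1.1, v.1.2, 0⟩ : HGrp p))
  left_inv := by
    intro q
    induction q using Quotient.ind with
    | _ x =>
      show Sum.elim _ _ (classify x) = ConjClasses.mk x
      by_cases h0 : (x.a, x.b) = 0
      · have h0' := Prod.mk_eq_zero.mp h0
        rw [show classify x = Sum.inl x.c from dif_pos h0, Sum.elim_inl,
          ConjClasses.mk_eq_mk_iff_isConj, HGrp.isConj_iff']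
        exact ⟨h0'.1.symm, h0'.2.symm, Or.inl rfl⟩
      · rw [show classify x = Sum.inr ⟨(x.a, x.b), h0⟩ from dif_neg h0, Sum.elim_inr,
          ConjClasses.mk_eq_mk_iff_isConj, HGrp.isConj_iff']
        refine ⟨rfl, rfl, Or.inr ?_⟩
        intro hab
        exact h0 (by rw [hab.1, hab.2]; rfl)
  right_inv := by
    rintro (c | ⟨⟨u, v⟩, h⟩)
    · show classify (⟨0, 0, c⟩ : HGrp p) = _
      simp [classify]
    · show classify (⟨u, v, 0⟩ : HGrp p) = _
      simp only [classify]
      rw [dif_neg h]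

/-- The number of conjugacy classes of the Heisenberg group `H_p` is `p^2 + p - 1`. -/
theorem heis_card_conjClasses (p : ℕ) [Fact p.Prime] :
    Nat.card (ConjClasses ↥(Heis p)) = p ^ 2 + p - 1 := by
  have e : ConjClasses ↥(Heis p) ≃ Lab p :=
    (conjClassesCongr (heisEquiv p)).symm.trans (countEquiv p)
  rw [Nat.card_congr e]
  have h1 : Nat.card (ZMod p) = p := Nat.card_zmod p
  have h2 : Nat.card {v : ZMod p × ZMod p // v ≠ 0} = p ^ 2 - 1 := by
    rw [Nat.card_eq_fintype_card]
    have : Fintype.card {v : ZMod p × ZMod p // v ≠ 0}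
        = Fintype.card (ZMod p × ZMod p) - Fintype.card {v : ZMod p × ZMod p // v = 0} :=
      Fintype.card_subtype_compl _
    rw [this, Fintype.card_subtype_eq (0 : ZMod p × ZMod p), Fintype.card_prod, ZMod.card]
    ring_nf
  rw [Nat.card_sum, h1, h2]
  have hp : 1 ≤ p := (Fact.out : p.Prime).one_lt.le
  have hp2 : 1 ≤ p ^ 2 := Nat.one_le_pow _ _ (by omega)
  omega
end
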